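/- In the power series ring ℚ[[q]] one has the identity Σ_{d≥2} (12·C_{d−2}/d)·q^d = (6q − 1) + (1 − 4q)·(1 − 2q·F(q)). (This is the one-variable identity proved inside Lemma 4.3, obtained by integrating the Catalan generating function: the left side is the generating function of the sequence b_d = 12·C_{d−2}/d, and 1 − 2q·F(q) is the power-series form of (1−4q)^{1/2}, so the right side is (6q−1) + (1−4q)^{3/2}.) -/

import Mathlib

noncomputable def catalanGF : PowerSeries ℚ := PowerSeries.mk fun n => (catalan n : ℚ)

lemma cat_rec (n : ℕ) : ((n : ℚ) + 2) * catalan (n + 1) = (4 * n + 2) * catalan n := by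
  have key : (n + 2) * catalan (n + 1) = (4 * n + 2) * catalan n := by
    have h1 := succ_mul_catalan_eq_centralBinom (n + 1)
    have h2 := Nat.succ_mul_centralBinom_succ n
    have h3 := succ_mul_catalan_eq_centralBinom n
    have : (n + 1) * ((n + 2) * catalan (n + 1)) = (n + 1) * ((4 * n + 2) * catalan n) := by
      rw [show n + 2 = (n+1)+1 from rfl, h1]
      calc (n+1) * (n+1).centralBinom = 2 * (2*n+1) * n.centralBinom := h2
        _ = 2 * (2*n+1) * ((n+1) * catalan n) := by rw [h3]
        _ = (n+1) * ((4*n+2) * catalan n) := by ring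
    exact Nat.eq_of_mul_eq_mul_left (by omega) this
  exact_mod_cast key

theorem catalan_integrated_gf :
    (PowerSeries.mk fun d => if 2 ≤ d then 12 * (catalan (d - 2) : ℚ) / (d : ℚ) else 0) =
      (6 * PowerSeries.X - 1) +
        (1 - 4 * PowerSeries.X) * (1 - 2 * PowerSeries.X * catalanGF) := by
  have hC : ∀ a : ℚ, PowerSeries.C (R := ℚ) a = (algebraMap ℚ (PowerSeries ℚ)) a := fun a => rfl
  have hC2 : PowerSeries.C (R := ℚ) 2 = 2 := by rw [hC, map_ofNat]
  have hCm2 : PowerSeries.C (R := ℚ) (-2) = -2 := by rw [map_neg, hC, map_ofNat]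
  have hC8 : PowerSeries.C (R := ℚ) 8 = 8 := by rw [hC, map_ofNat]
  have hrhs : (6 * PowerSeries.X - 1) +
        (1 - 4 * PowerSeries.X) * (1 - 2 * PowerSeries.X * catalanGF)
      = PowerSeries.X * PowerSeries.C (R := ℚ) 2
        + PowerSeries.X * ((PowerSeries.C (R := ℚ) (-2)) * catalanGF)
        + PowerSeries.X * (PowerSeries.X * ((PowerSeries.C (R := ℚ) 8) * catalanGF)) := by
    rw [hC2, hCm2, hC8]; ring
  rw [hrhs]
  ext d
  match d with
  | 0 => simp [catalanGF]
  | 1 => simp [catalanGF, PowerSeries.coeff_succ_X_mul]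
  | (n+2) =>
    rw [map_add, map_add]
    rw [show n + 2 = (n+1)+1 from rfl, PowerSeries.coeff_succ_X_mul,
      PowerSeries.coeff_succ_X_mul, PowerSeries.coeff_succ_X_mul, PowerSeries.coeff_succ_X_mul,
      PowerSeries.coeff_C_mul, PowerSeries.coeff_C_mul, PowerSeries.coeff_C,
      if_neg (by omega : ¬ n + 1 = 0)]
    simp only [catalanGF, PowerSeries.coeff_mk, if_pos (by omega : 2 ≤ n + 2)]
    have hrec := cat_rec n
    have hd : ((n : ℚ) + 2) ≠ 0 := by positivity
    push_cast
    field_simp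
    linear_combination (2 : ℚ) * hrec
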